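/- Let (F,σ) be a constant-stable difference field of characteristic 0, let e ≥ 1, let λ_1,…,λ_e be integers > 1, and let α_1,…,α_e ∈ const(F,σ) with α_i^{λ_i} = 1 for each i. Let E := F[z_1,…,z_e]/⟨z_1^{λ_1}−1,…,z_e^{λ_e}−1⟩ with t_i the image of z_i, equipped with the unique ring automorphism extending σ with σ(t_i) = α_i·t_i. Then const(E,σ) = const(F,σ) if and only if each α_i is a primitive λ_i-th root of unity in F and gcd(λ_i,λ_j) = 1 for all i ≠ j. -/

import Mathlib

open MvPolynomial

private lemma pow_mod_eq_pow {M : Type*} [Monoid M] {x : M} {L : ℕ} (h : x ^ L = 1) (n : ℕ) :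
    x ^ (n % L) = x ^ n := by
  conv_rhs => rw [← Nat.div_add_mod n L]
  rw [pow_add, pow_mul, h, one_pow, one_mul]

set_option maxHeartbeats 1000000 in
set_option synthInstance.maxHeartbeats 400000 in
theorem stmt7 {F : Type*} [Field F] [CharZero F]
    (σ : F ≃+* F)
    (hCS : ∀ k : ℕ, 1 ≤ k → ∀ c : F, (⇑σ)^[k] c = c → σ c = c)
    (e : ℕ) (he : 1 ≤ e)
    (lam : Fin e → ℕ) (hlam : ∀ i, 1 < lam i)
    (α : Fin e → F) (hαconst : ∀ i, σ (α i) = α i)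
    (hαpow : ∀ i, α i ^ lam i = 1)
    (I : Ideal (MvPolynomial (Fin e) F))
    (hI : I = Ideal.span (Set.range fun i =>
        MvPolynomial.X i ^ lam i - (1 : MvPolynomial (Fin e) F)))
    (σE : (MvPolynomial (Fin e) F ⧸ I) ≃+* (MvPolynomial (Fin e) F ⧸ I))
    (hEC : ∀ a : F, σE (Ideal.Quotient.mk I (MvPolynomial.C a)) =
        Ideal.Quotient.mk I (MvPolynomial.C (σ a)))
    (hEX : ∀ i, σE (Ideal.Quotient.mk I (MvPolynomial.X i)) =
        Ideal.Quotient.mk I (MvPolynomial.C (α i) * MvPolynomial.X i)) :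
    (∀ f : MvPolynomial (Fin e) F ⧸ I, σE f = f →
        ∃ c : F, σ c = c ∧ f = Ideal.Quotient.mk I (MvPolynomial.C c)) ↔
      ((∀ i, ∀ m : ℕ, 1 ≤ m → m < lam i → α i ^ m ≠ 1) ∧
        (∀ i j, i ≠ j → Nat.Coprime (lam i) (lam j))) := by
  classical
  haveI hNZ : ∀ i, NeZero (lam i) := fun i => ⟨by have := hlam i; omega⟩
  haveI hF1 : ∀ i, Fact (1 < lam i) := fun i => ⟨hlam i⟩
  set mk : MvPolynomial (Fin e) F →+* MvPolynomial (Fin e) F ⧸ I := Ideal.Quotient.mk I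
    with hmkdef
  have hmem : ∀ i, (X i ^ lam i - 1 : MvPolynomial (Fin e) F) ∈ I := fun i => by
    rw [hI]; exact Ideal.subset_span ⟨i, rfl⟩
  have hT : ∀ i, (mk (X i)) ^ lam i = 1 := by
    intro i
    have h0 : mk (X i ^ lam i - 1) = 0 := Ideal.Quotient.eq_zero_iff_mem.mpr (hmem i)
    rw [map_sub, map_pow, map_one, sub_eq_zero] at h0
    exact h0
  have hα0 : ∀ i, α i ≠ 0 := by
    intro i h
    have h1 := hαpow i
    rw [h, zero_pow (by have := hlam i; omega : lam i ≠ 0)] at h1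
    exact zero_ne_one h1
  -- the group algebra A = F[G], G = ∏ ZMod (lam i)
  set Φ : MvPolynomial (Fin e) F →ₐ[F] AddMonoidAlgebra F (∀ i, ZMod (lam i)) :=
    MvPolynomial.aeval (fun i => AddMonoidAlgebra.of F (∀ i, ZMod (lam i))
      (Multiplicative.ofAdd (Pi.single i 1))) with hΦdef
  have hΦX : ∀ i, Φ (X i) = AddMonoidAlgebra.single (Pi.single i 1) 1 := by
    intro i
    rw [hΦdef, MvPolynomial.aeval_X, AddMonoidAlgebra.of_apply]
    rfl
  have hsmul_single : ∀ (i : Fin e) (n : ℕ),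
      n • (Pi.single i (1 : ZMod (lam i)) : ∀ j, ZMod (lam j)) = Pi.single i (n : ZMod (lam i)) := by
    intro i n
    funext j
    rcases eq_or_ne j i with rfl | hji
    · simp [Pi.single_eq_same, nsmul_eq_mul]
    · simp [Pi.single_eq_of_ne hji]
  have hΦXpow : ∀ (i : Fin e) (n : ℕ),
      Φ (X i ^ n) = AddMonoidAlgebra.single (Pi.single i (n : ZMod (lam i))) 1 := by
    intro i n
    rw [map_pow, hΦX, AddMonoidAlgebra.single_pow, one_pow, hsmul_single]
  have hΦC : ∀ a : F, Φ (C a) = AddMonoidAlgebra.single 0 a := by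
    intro a
    rw [hΦdef]
    simp [MvPolynomial.aeval_C, AddMonoidAlgebra.coe_algebraMap]
  have hΦI : ∀ p ∈ I, Φ p = 0 := by
    have hle : I ≤ RingHom.ker Φ.toRingHom := by
      rw [hI, Ideal.span_le]
      rintro _ ⟨i, rfl⟩
      simp only [SetLike.mem_coe, RingHom.mem_ker, AlgHom.toRingHom_eq_coe,
        RingHom.coe_coe, map_sub, map_one]
      rw [hΦXpow i (lam i), ZMod.natCast_self, Pi.single_zero, AddMonoidAlgebra.one_def,
        sub_self]
    exact fun p hp => hle hp
  set ΦE : (MvPolynomial (Fin e) F ⧸ I) →ₐ[F] AddMonoidAlgebra F (∀ i, ZMod (lam i)) :=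
    Ideal.Quotient.liftₐ I Φ hΦI with hΦEdef
  have hΦEmk : ∀ p, ΦE (mk p) = Φ p := by
    intro p
    rw [hΦEdef, Ideal.Quotient.liftₐ_apply, hmkdef]
    rfl
  have hΦEC : ∀ a : F, ΦE (mk (C a)) = AddMonoidAlgebra.single 0 a := fun a => by
    rw [hΦEmk, hΦC]
  -- Ψ, ψ : backwards map
  have hTpow : ∀ (i : Fin e) (m n : ZMod (lam i)),
      mk (X i) ^ (m + n).val = mk (X i) ^ m.val * mk (X i) ^ n.val := by
    intro i m n
    rw [ZMod.val_add, pow_mod_eq_pow (hT i), pow_add]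
  set Ψ : Multiplicative (∀ i, ZMod (lam i)) →* (MvPolynomial (Fin e) F ⧸ I) :=
    { toFun := fun g => ∏ i, mk (X i) ^ ((Multiplicative.toAdd g) i).val,
      map_one' := by simp,
      map_mul' := by
        intro g h
        show ∏ i, mk (X i) ^ ((Multiplicative.toAdd g i + Multiplicative.toAdd h i)).val = _
        rw [← Finset.prod_mul_distrib]
        exact Finset.prod_congr rfl fun i _ => hTpow i _ _ } with hΨdef
  set ψ : AddMonoidAlgebra F (∀ i, ZMod (lam i)) →ₐ[F] (MvPolynomial (Fin e) F ⧸ I) :=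
    AddMonoidAlgebra.lift F _ (∀ i, ZMod (lam i)) Ψ with hψdef
  set Tm : (∀ i, ZMod (lam i)) → (MvPolynomial (Fin e) F ⧸ I) :=
    fun g => ∏ i, mk (X i) ^ (g i).val with hTmdef
  set Am : (∀ i, ZMod (lam i)) → F := fun g => ∏ i, α i ^ (g i).val with hAmdef
  have halgmk : ∀ c : F, algebraMap F (MvPolynomial (Fin e) F ⧸ I) c = mk (C c) := by
    intro c
    rw [hmkdef, ← MvPolynomial.algebraMap_eq, ← Ideal.Quotient.mkₐ_eq_mk F I]
    exact ((Ideal.Quotient.mkₐ F I).commutes c).symm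
  have hψsingle : ∀ g (c : F), ψ (AddMonoidAlgebra.single g c) = mk (C c) * Tm g := by
    intro g c
    rw [hψdef, AddMonoidAlgebra.lift_single, Algebra.smul_def, halgmk]
    rfl
  have hTm_single : ∀ (i : Fin e) (n : ℕ),
      Tm (Pi.single i (n : ZMod (lam i))) = mk (X i) ^ n := by
    intro i n
    simp only [hTmdef]
    rw [Finset.prod_eq_single i]
    · rw [Pi.single_eq_same, ZMod.val_natCast, pow_mod_eq_pow (hT i)]
    · intro j _ hji
      rw [Pi.single_eq_of_ne hji, ZMod.val_zero, pow_zero]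
    · intro h; exact absurd (Finset.mem_univ i) h
  have hAm_single : ∀ (i : Fin e) (n : ℕ),
      Am (Pi.single i (n : ZMod (lam i))) = α i ^ n := by
    intro i n
    simp only [hAmdef]
    rw [Finset.prod_eq_single i]
    · rw [Pi.single_eq_same, ZMod.val_natCast, pow_mod_eq_pow (hαpow i)]
    · intro j _ hji
      rw [Pi.single_eq_of_ne hji, ZMod.val_zero, pow_zero]
    · intro h; exact absurd (Finset.mem_univ i) h
  have hAm_add : ∀ g h, Am (g + h) = Am g * Am h := by
    intro g h
    simp only [hAmdef]
    show (∏ i, α i ^ ((g i + h i)).val) = _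
    rw [← Finset.prod_mul_distrib]
    refine Finset.prod_congr rfl fun i _ => ?_
    rw [ZMod.val_add, pow_mod_eq_pow (hαpow i), pow_add]
  have hAm_zero : Am 0 = 1 := by
    simp only [hAmdef]
    show (∏ i, α i ^ ((0 : ZMod (lam i))).val) = 1
    simp
  have hTm_zero : Tm 0 = 1 := by
    simp only [hTmdef]
    show (∏ i, mk (X i) ^ ((0 : ZMod (lam i))).val) = 1
    simp
  have hψΦ : ∀ p, ψ (Φ p) = mk p := by
    have hext : ψ.comp Φ = Ideal.Quotient.mkₐ F I := by
      apply MvPolynomial.algHom_ext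
      intro i
      rw [AlgHom.comp_apply, hΦX, hψsingle]
      simp only [map_one, one_mul]
      have h1 : (Pi.single i (1 : ZMod (lam i)) : ∀ j, ZMod (lam j))
          = Pi.single i ((1 : ℕ) : ZMod (lam i)) := by norm_num
      rw [h1, hTm_single i 1, pow_one, Ideal.Quotient.mkₐ_eq_mk, hmkdef]
    intro p
    have h2 := DFunLike.congr_fun hext p
    rw [AlgHom.comp_apply] at h2
    rw [h2, Ideal.Quotient.mkₐ_eq_mk, hmkdef]
  have hΦE_Tm : ∀ g, ΦE (Tm g) = AddMonoidAlgebra.single g 1 := by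
    intro g
    have h1 : Tm g = mk (∏ i, X i ^ (g i).val) := by
      simp only [hTmdef]
      rw [map_prod]
      exact Finset.prod_congr rfl fun i _ => by rw [map_pow]
    rw [h1, hΦEmk, map_prod]
    rw [Finset.prod_congr rfl fun i _ => hΦXpow i ((g i).val), AddMonoidAlgebra.prod_single,
      Finset.prod_const_one]
    congr 1
    funext j
    rw [Finset.sum_apply]
    rw [Finset.sum_eq_single j]
    · rw [Pi.single_eq_same]
      exact ZMod.natCast_rightInverse (g j)
    · intro b _ hbj
      exact Pi.single_eq_of_ne hbj.symm _
    · intro h; exact absurd (Finset.mem_univ j) h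
  have hcoeff : ∀ (c : (∀ i, ZMod (lam i)) → F) (g₀ : ∀ i, ZMod (lam i)),
      (∑ g : (∀ i, ZMod (lam i)), AddMonoidAlgebra.single g (c g)).coeff g₀ = c g₀ := by
    intro c g₀
    rw [AddMonoidAlgebra.coeff_sum, Finsupp.finset_sum_apply, Finset.sum_eq_single g₀]
    · exact Finsupp.single_eq_same
    · intro g _ hg
      exact Finsupp.single_eq_of_ne hg.symm
    · intro h; exact absurd (Finset.mem_univ g₀) h
  have hdecomp : ∀ f : MvPolynomial (Fin e) F ⧸ I,
      f = ∑ g : (∀ i, ZMod (lam i)), mk (C ((ΦE f).coeff g)) * Tm g := by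
    intro f
    obtain ⟨p, rfl⟩ := Ideal.Quotient.mk_surjective (I := I) f
    rw [show Ideal.Quotient.mk I p = mk p from rfl]
    have h1 : (Φ p) = ∑ g : (∀ i, ZMod (lam i)), AddMonoidAlgebra.single g ((Φ p).coeff g) := by
      apply AddMonoidAlgebra.ext
      apply Finsupp.ext
      intro g₀
      rw [hcoeff (fun g => (Φ p).coeff g) g₀]
    conv_lhs => rw [← hψΦ p, h1]
    rw [map_sum]
    refine Finset.sum_congr rfl fun g _ => ?_
    rw [hψsingle, hΦEmk]
  have huniq : ∀ (c c' : (∀ i, ZMod (lam i)) → F),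
      (∑ g : (∀ i, ZMod (lam i)), mk (C (c g)) * Tm g)
        = (∑ g : (∀ i, ZMod (lam i)), mk (C (c' g)) * Tm g) → ∀ g, c g = c' g := by
    intro c c' h g₀
    have h3 : ∀ (c : (∀ i, ZMod (lam i)) → F) (g : ∀ i, ZMod (lam i)),
        ΦE (mk (C (c g)) * Tm g) = AddMonoidAlgebra.single g (c g) := by
      intro c g
      rw [map_mul, hΦEC, hΦE_Tm, AddMonoidAlgebra.single_mul_single, zero_add, mul_one]
    have h2 := congrArg ΦE h
    rw [map_sum, map_sum, Finset.sum_congr rfl fun g _ => h3 c g,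
      Finset.sum_congr rfl fun g _ => h3 c' g] at h2
    have h4 := congrArg (fun x => x.coeff g₀) h2
    rw [hcoeff c g₀, hcoeff c' g₀] at h4
    exact h4
  have hσTm : ∀ g, σE (Tm g) = mk (C (Am g)) * Tm g := by
    intro g
    simp only [hTmdef, hAmdef]
    show σE (∏ i, mk (X i) ^ (g i).val) = _
    rw [map_prod]
    have h1 : ∀ i : Fin e, σE (mk (X i) ^ (g i).val)
        = mk (C (α i ^ (g i).val)) * mk (X i) ^ (g i).val := by
      intro i
      rw [map_pow, hEX i, map_mul, mul_pow, ← map_pow, ← map_pow]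
    rw [Finset.prod_congr rfl fun i _ => h1 i, Finset.prod_mul_distrib, ← map_prod, ← map_prod]
  have hmono_ne : ∀ g : (∀ i, ZMod (lam i)), g ≠ 0 → ∀ c : F, Tm g ≠ mk (C c) := by
    intro g hg c h
    have h1 : AddMonoidAlgebra.single g (1 : F) = AddMonoidAlgebra.single 0 c := by
      rw [← hΦE_Tm g, h, hΦEC]
    have h2 := congrArg (fun x => x.coeff g) h1
    rw [AddMonoidAlgebra.coeff_single, AddMonoidAlgebra.coeff_single, Finsupp.single_eq_same,
      Finsupp.single_eq_of_ne hg] at h2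
    exact one_ne_zero h2
  have hfix_coeff : ∀ f, σE f = f → ∀ g, σ ((ΦE f).coeff g) * Am g = (ΦE f).coeff g := by
    intro f hf
    have h2 : σE f = ∑ g : (∀ i, ZMod (lam i)), mk (C (σ ((ΦE f).coeff g) * Am g)) * Tm g := by
      conv_lhs => rw [hdecomp f]
      rw [map_sum]
      refine Finset.sum_congr rfl fun g _ => ?_
      rw [map_mul, hEC, hσTm g, ← mul_assoc, ← map_mul, ← map_mul]
    exact huniq _ _ (by rw [← h2, hf]; exact hdecomp f)
  constructor
  · -- forward direction
    intro hL
    have hprim : ∀ i, ∀ m : ℕ, 1 ≤ m → m < lam i → α i ^ m ≠ 1 := by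
      intro i m hm1 hmlt hone
      have hg : (Pi.single i ((m : ℕ) : ZMod (lam i)) : ∀ j, ZMod (lam j)) ≠ 0 := by
        intro h0
        have h1 := congrFun h0 i
        rw [Pi.single_eq_same, Pi.zero_apply] at h1
        have hv := congrArg ZMod.val h1
        rw [ZMod.val_natCast, Nat.mod_eq_of_lt hmlt, ZMod.val_zero] at hv
        omega
      have hfix : σE (Tm (Pi.single i ((m : ℕ) : ZMod (lam i))))
          = Tm (Pi.single i ((m : ℕ) : ZMod (lam i))) := by
        rw [hσTm, hAm_single, hone]
        simp only [map_one, one_mul]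
      obtain ⟨c, -, hc⟩ := hL _ hfix
      exact hmono_ne _ hg c hc
    refine ⟨hprim, ?_⟩
    intro i j hij
    by_contra hnc
    set d := Nat.gcd (lam i) (lam j) with hd
    have hd0 : 0 < d := Nat.gcd_pos_of_pos_left _ (by have := hlam i; omega)
    have hd2 : 2 ≤ d := by
      by_contra hlt
      have hd1 : d = 1 := by omega
      exact hnc (show Nat.gcd (lam i) (lam j) = 1 by rw [← hd, hd1])
    have hdi : d ∣ lam i := Nat.gcd_dvd_left _ _
    have hdj : d ∣ lam j := Nat.gcd_dvd_right _ _
    have hordi : orderOf (α i) = lam i :=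
      (orderOf_eq_iff (by have := hlam i; omega)).mpr
        ⟨hαpow i, fun m hmlt hm0 => hprim i m hm0 hmlt⟩
    have hordj : orderOf (α j) = lam j :=
      (orderOf_eq_iff (by have := hlam j; omega)).mpr
        ⟨hαpow j, fun m hmlt hm0 => hprim j m hm0 hmlt⟩
    have hpipos : 0 < lam i / d := Nat.div_pos (Nat.le_of_dvd (by have := hlam i; omega) hdi) hd0
    have hpilt : lam i / d < lam i := Nat.div_lt_self (by have := hlam i; omega) (by omega)
    have hpjle : lam j / d ≤ lam j := Nat.div_le_self _ _
    have horda : orderOf (α i ^ (lam i / d)) = d := by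
      rw [orderOf_pow' _ (by omega : lam i / d ≠ 0), hordi,
        Nat.gcd_eq_right (Nat.div_dvd_of_dvd hdi), Nat.div_div_self hdi (by have := hlam i; omega)]
    have hordb : orderOf (α j ^ (lam j / d)) = d := by
      rw [orderOf_pow' _ (by
        have : 0 < lam j / d := Nat.div_pos (Nat.le_of_dvd (by have := hlam j; omega) hdj) hd0
        omega : lam j / d ≠ 0), hordj,
        Nat.gcd_eq_right (Nat.div_dvd_of_dvd hdj), Nat.div_div_self hdj (by have := hlam j; omega)]
    set ub : Fˣ := Units.mk0 (α j ^ (lam j / d)) (pow_ne_zero _ (hα0 j)) with hubdef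
    have hordub : orderOf ub = d := by
      rw [← orderOf_units]
      exact hordb
    set S := (Polynomial.nthRoots d (1 : F)).toFinset with hSdef
    have hcardS : S.card ≤ d :=
      le_trans (Multiset.toFinset_card_le _) (Polynomial.card_nthRoots d 1)
    set B := (Finset.range d).image (fun k => ((ub ^ k : Fˣ) : F)) with hBdef
    have hBcard : B.card = d := by
      rw [hBdef, Finset.card_image_of_injOn, Finset.card_range]
      intro x hx y hy hxy
      have hx' : x < orderOf ub := by
        rw [hordub]; exact Finset.mem_coe.mp hx |> Finset.mem_range.mp
      have hy' : y < orderOf ub := by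
        rw [hordub]; exact Finset.mem_coe.mp hy |> Finset.mem_range.mp
      exact pow_injOn_Iio_orderOf hx' hy' (Units.ext hxy)
    have hBS : B ⊆ S := by
      intro x hx
      rw [hBdef] at hx
      obtain ⟨k, -, rfl⟩ := Finset.mem_image.mp hx
      rw [hSdef, Multiset.mem_toFinset, Polynomial.mem_nthRoots hd0]
      have h1 : (ub ^ k) ^ d = 1 := by
        rw [← pow_mul, mul_comm, pow_mul, ← hordub, pow_orderOf_eq_one, one_pow]
      rw [← Units.val_pow_eq_pow_val, h1, Units.val_one]
    have hSB : S = B := (Finset.eq_of_subset_of_card_le hBS (by rw [hBcard]; exact hcardS)).symm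
    have haS : (α i ^ (lam i / d)) ∈ S := by
      rw [hSdef, Multiset.mem_toFinset, Polynomial.mem_nthRoots hd0]
      exact orderOf_dvd_iff_pow_eq_one.mp (by rw [horda])
    rw [hSB, hBdef] at haS
    obtain ⟨s, -, hs⟩ := Finset.mem_image.mp haS
    have hkey : α i ^ (lam i / d) * α j ^ (s * (lam j - lam j / d)) = 1 := by
      have h1 : (ub : F) * α j ^ (lam j - lam j / d) = 1 := by
        rw [hubdef, Units.val_mk0, ← pow_add, Nat.add_sub_cancel' hpjle, hαpow j]
      rw [← hs, Units.val_pow_eq_pow_val, pow_mul', ← mul_pow, h1, one_pow]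
    set g : ∀ k, ZMod (lam k) :=
      Pi.single i (((lam i / d : ℕ)) : ZMod (lam i))
        + Pi.single j (((s * (lam j - lam j / d) : ℕ)) : ZMod (lam j)) with hgdef
    have hAmg : Am g = 1 := by
      simp only [hgdef]
      rw [hAm_add, hAm_single, hAm_single, hkey]
    have hgne : g ≠ 0 := by
      intro h0
      have h2 := congrFun h0 i
      rw [hgdef] at h2
      rw [Pi.add_apply, Pi.single_eq_same, Pi.single_eq_of_ne hij, add_zero,
        Pi.zero_apply] at h2
      have hv := congrArg ZMod.val h2
      rw [ZMod.val_natCast, Nat.mod_eq_of_lt hpilt, ZMod.val_zero] at hv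
      omega
    have hfix : σE (Tm g) = Tm g := by
      rw [hσTm, hAmg]
      simp only [map_one, one_mul]
    obtain ⟨c, -, hc⟩ := hL _ hfix
    exact hmono_ne _ hgne c hc
  · -- backward direction
    rintro ⟨hprim, hcop⟩ f hf
    have hordα : ∀ i, orderOf (α i) = lam i := fun i =>
      (orderOf_eq_iff (by have := hlam i; omega)).mpr
        ⟨hαpow i, fun m hmlt hm0 => hprim i m hm0 hmlt⟩
    have heq := hfix_coeff f hf
    have hzero : ∀ g : (∀ i, ZMod (lam i)), g ≠ 0 → (ΦE f).coeff g = 0 := by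
      intro g hg
      have hβconst : σ (Am g) = Am g := by
        simp only [hAmdef]
        show σ (∏ i, α i ^ (g i).val) = _
        rw [map_prod]
        exact Finset.prod_congr rfl fun i _ => by rw [map_pow, hαconst]
      have hβne0 : Am g ≠ 0 := by
        simp only [hAmdef]
        exact Finset.prod_ne_zero_iff.mpr fun i _ => pow_ne_zero _ (hα0 i)
      have hβN : Am g ^ (∏ i, lam i) = 1 := by
        simp only [hAmdef]
        show (∏ i, α i ^ (g i).val) ^ (∏ i, lam i) = 1
        rw [← Finset.prod_pow]
        refine Finset.prod_eq_one fun i _ => ?_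
        obtain ⟨k, hk⟩ := Finset.dvd_prod_of_mem lam (Finset.mem_univ i)
        rw [← pow_mul, mul_comm, pow_mul, hk, pow_mul, hαpow i, one_pow, one_pow]
      have hβfin : IsOfFinOrder (Am g) :=
        isOfFinOrder_iff_pow_eq_one.mpr
          ⟨∏ i, lam i, Finset.prod_pos (fun i _ => by have := hlam i; omega), hβN⟩
      have hβ1 : Am g ≠ 1 := by
        intro h1
        obtain ⟨i, hgi⟩ : ∃ i, g i ≠ 0 := by
          by_contra hno
          push_neg at hno
          exact hg (funext hno)
        have hvlt : (g i).val < lam i := ZMod.val_lt _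
        have hvpos : 0 < (g i).val :=
          Nat.pos_of_ne_zero (fun h => hgi ((ZMod.val_eq_zero _).mp h))
        have hβM : Am g ^ (∏ j ∈ Finset.univ.erase i, lam j)
            = α i ^ ((g i).val * (∏ j ∈ Finset.univ.erase i, lam j)) := by
          have h2 : ∀ j : Fin e, j ≠ i →
              (α j ^ (g j).val) ^ (∏ j ∈ Finset.univ.erase i, lam j) = 1 := by
            intro j hji
            obtain ⟨k, hk⟩ := Finset.dvd_prod_of_mem lam
              (Finset.mem_erase.mpr ⟨hji, Finset.mem_univ j⟩)
            rw [← pow_mul, mul_comm, pow_mul, hk, pow_mul, hαpow j, one_pow, one_pow]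
          simp only [hAmdef]
          show (∏ j, α j ^ (g j).val) ^ _ = _
          rw [← Finset.prod_pow,
            Finset.prod_eq_single i (fun j _ hji => h2 j hji)
              (fun h => absurd (Finset.mem_univ i) h), ← pow_mul]
        rw [h1, one_pow] at hβM
        have hdvd : lam i ∣ (g i).val * (∏ j ∈ Finset.univ.erase i, lam j) := by
          have h9 := orderOf_dvd_of_pow_eq_one hβM.symm
          rwa [hordα i] at h9
        have hcopM : Nat.Coprime (lam i) (∏ j ∈ Finset.univ.erase i, lam j) :=
          Nat.Coprime.prod_right fun j hj => hcop i j (Finset.ne_of_mem_erase hj).symm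
        have h3 : lam i ∣ (g i).val := hcopM.dvd_of_dvd_mul_right hdvd
        have h4 := Nat.le_of_dvd hvpos h3
        omega
      have h := heq g
      have hσx : σ ((ΦE f).coeff g) = (ΦE f).coeff g * (Am g)⁻¹ :=
        (eq_mul_inv_iff_mul_eq₀ hβne0).mpr h
      have hβinvconst : σ (Am g)⁻¹ = (Am g)⁻¹ := by rw [map_inv₀, hβconst]
      have hmul : ∀ (k : ℕ) (a b : F), (⇑σ)^[k] (a * b) = (⇑σ)^[k] a * (⇑σ)^[k] b := by
        intro k
        induction k with
        | zero => intro a b; simp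
        | succ n ih =>
          intro a b
          rw [Function.iterate_succ_apply, Function.iterate_succ_apply,
            Function.iterate_succ_apply, map_mul, ih]
      have hconst_iter : ∀ (k : ℕ) (a : F), σ a = a → (⇑σ)^[k] a = a := by
        intro k a ha
        induction k with
        | zero => rfl
        | succ n ih => rw [Function.iterate_succ_apply, ha, ih]
      have hiter : ∀ k : ℕ, (⇑σ)^[k] ((ΦE f).coeff g) = (ΦE f).coeff g * ((Am g)⁻¹) ^ k := by
        intro k
        induction k with
        | zero => simp
        | succ n ih =>
          rw [Function.iterate_succ_apply, hσx, hmul, ih,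
            hconst_iter n _ hβinvconst, pow_succ, mul_assoc]
      have hdβpos : 1 ≤ orderOf (Am g) := orderOf_pos_iff.mpr hβfin
      have hfixx : (⇑σ)^[orderOf (Am g)] ((ΦE f).coeff g) = (ΦE f).coeff g := by
        rw [hiter, inv_pow, pow_orderOf_eq_one, inv_one, mul_one]
      have hσxx : σ ((ΦE f).coeff g) = (ΦE f).coeff g := hCS _ hdβpos _ hfixx
      rw [hσxx] at h
      have h5 : (ΦE f).coeff g * (Am g - 1) = 0 := by
        rw [mul_sub, mul_one, h, sub_self]
      rcases mul_eq_zero.mp h5 with h6 | h6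
      · exact h6
      · exact absurd (sub_eq_zero.mp h6) hβ1
    refine ⟨(ΦE f).coeff 0, ?_, ?_⟩
    · have h0 := heq 0
      rw [hAm_zero, mul_one] at h0
      exact h0
    · conv_lhs => rw [hdecomp f]
      rw [show Ideal.Quotient.mk I (C ((ΦE f).coeff 0)) = mk (C ((ΦE f).coeff 0)) from rfl]
      rw [Finset.sum_eq_single (0 : ∀ i, ZMod (lam i))]
      · rw [hTm_zero, mul_one]
      · intro g _ hg
        rw [hzero g hg, map_zero, map_zero, zero_mul]
      · intro h; exact absurd (Finset.mem_univ _) h
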